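/- Let F be the Pareto distribution with F̄(x) = x^{-α} for x ≥ 1, α > 1, and let 1 ≤ h(x) ≤ x/4. Then J(x,h(x)) = ∫_{h(x)}^{x−h(x)} F̄(x−y)/F̄(x) dF(y) ≤ 2(2/h(x))^α + (4/x)^α. -/

import Mathlib

open Filter Set MeasureTheory

/-- The tail of the Pareto(α,1) distribution. -/
noncomputable def paretoTail (α : ℝ) (x : ℝ) : ℝ := if x < 1 then 1 else x ^ (-α)

/-- The Pareto(α,1) measure, with density α y^{-(α+1)} on [1,∞). -/
noncomputable def paretoMeasure (α : ℝ) : Measure ℝ :=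
  volume.withDensity (fun y => ENNReal.ofReal (if 1 ≤ y then α * y ^ (-(α + 1)) else 0))

lemma paretoTail_nonneg (α x : ℝ) : 0 ≤ paretoTail α x := by
  unfold paretoTail
  split
  · norm_num
  · exact Real.rpow_nonneg (by linarith [not_lt.mp ‹¬ x < 1›]) _

lemma paretoTail_of_ge (α : ℝ) {x : ℝ} (hx : 1 ≤ x) : paretoTail α x = x ^ (-α) := by
  simp [paretoTail, not_lt.mpr hx]

lemma measurable_integrand (α x : ℝ) :
    Measurable (fun y => paretoTail α (x - y) / paretoTail α x) := by
  have hm : Measurable (paretoTail α) := by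
    unfold paretoTail
    apply Measurable.ite measurableSet_Iio measurable_const
    measurability
  exact (hm.comp (measurable_const.sub measurable_id)).div_const _

lemma paretoMeasure_Ioc (α : ℝ) (hα : 0 < α) {a b : ℝ} (ha : 1 ≤ a) (hab : a ≤ b) :
    paretoMeasure α (Set.Ioc a b) = ENNReal.ofReal (a ^ (-α) - b ^ (-α)) := by
  have ha0 : 0 < a := lt_of_lt_of_le one_pos ha
  have hαne : α ≠ 0 := ne_of_gt hα
  rw [paretoMeasure, withDensity_apply _ measurableSet_Ioc]
  have h1 : ∫⁻ y in Set.Ioc a b, ENNReal.ofReal (if 1 ≤ y then α * y ^ (-(α + 1)) else 0)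
      = ∫⁻ y in Set.Ioc a b, ENNReal.ofReal (α * y ^ (-(α + 1))) := by
    apply setLIntegral_congr_fun measurableSet_Ioc
    intro y hy
    simp only [if_pos (ha.trans hy.1.le)]
  rw [h1]
  have hInt : IntervalIntegrable (fun y : ℝ => α * y ^ (-(α + 1))) volume a b := by
    apply IntervalIntegrable.const_mul
    apply intervalIntegral.intervalIntegrable_rpow
    right
    intro h0
    rw [Set.mem_uIcc] at h0
    rcases h0 with ⟨h0, _⟩ | ⟨_, h0⟩ <;> linarith
  have hIntOn : IntegrableOn (fun y : ℝ => α * y ^ (-(α + 1))) (Set.Ioc a b) volume :=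
    hInt.1
  rw [← ofReal_integral_eq_lintegral_ofReal hIntOn]
  · congr 1
    rw [← intervalIntegral.integral_of_le hab]
    rw [intervalIntegral.integral_const_mul]
    rw [integral_rpow]
    · have h2 : -(α + 1) + 1 = -α := by ring
      rw [h2, div_neg, mul_neg, ← mul_div_assoc, mul_div_cancel_left₀ _ hαne]
      ring
    · right
      constructor
      · intro hc; linarith
      · intro h0
        rw [Set.mem_uIcc] at h0
        rcases h0 with ⟨h0, _⟩ | ⟨_, h0⟩ <;> linarith
  · filter_upwards [ae_restrict_mem measurableSet_Ioc] with y hy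
    have hy1 : (0:ℝ) < y := lt_of_lt_of_le ha0 hy.1.le
    positivity

lemma piece_bound (α : ℝ) (hα : 0 < α) {a b C : ℝ} (ha : 1 ≤ a) (hab : a ≤ b) (hC0 : 0 ≤ C)
    {f : ℝ → ℝ} (hf : Measurable f) (hC : ∀ y ∈ Set.Ioc a b, ‖f y‖ ≤ C) :
    (∫ y in Set.Ioc a b, f y ∂(paretoMeasure α)) ≤ C * a ^ (-α) := by
  have ha0 : 0 < a := lt_of_lt_of_le one_pos ha
  have hμ : paretoMeasure α (Set.Ioc a b) = ENNReal.ofReal (a ^ (-α) - b ^ (-α)) :=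
    paretoMeasure_Ioc α hα ha hab
  have hμfin : paretoMeasure α (Set.Ioc a b) < ⊤ := by rw [hμ]; exact ENNReal.ofReal_lt_top
  calc (∫ y in Set.Ioc a b, f y ∂(paretoMeasure α))
      ≤ ‖∫ y in Set.Ioc a b, f y ∂(paretoMeasure α)‖ := Real.le_norm_self _
    _ ≤ C * ((paretoMeasure α) (Set.Ioc a b)).toReal :=
        norm_setIntegral_le_of_norm_le_const hμfin hC
    _ ≤ C * a ^ (-α) := by
        apply mul_le_mul_of_nonneg_left _ hC0
        rw [hμ, ENNReal.toReal_ofReal_eq_iff.mpr]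
        · have : (0:ℝ) ≤ b ^ (-α) := Real.rpow_nonneg (by linarith) _
          linarith
        · have := Real.rpow_le_rpow_of_nonpos ha0 hab (neg_nonpos.mpr hα.le)
          linarith

/-- For the Pareto distribution with 1 ≤ h(x) ≤ x/4:
J(x,h(x)) = ∫_{h(x)}^{x−h(x)} F̄(x−y)/F̄(x) dF(y) ≤ 2(2/h(x))^α + (4/x)^α. -/
theorem pareto_J_bound (α : ℝ) (hα : 1 < α) (h : ℝ → ℝ) :
    ∀ x : ℝ, 1 ≤ h x → h x ≤ x / 4 →
      (∫ y in Set.Ioc (h x) (x - h x),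
          paretoTail α (x - y) / paretoTail α x ∂(paretoMeasure α)) ≤
        2 * (2 / h x) ^ α + (4 / x) ^ α := by
  intro x h1 h4
  set H := h x with hH
  have hα0 : 0 < α := lt_trans one_pos hα
  have hH0 : (0:ℝ) < H := lt_of_lt_of_le one_pos h1
  have hx4 : (4:ℝ) ≤ x := by linarith
  have hx0 : (0:ℝ) < x := by linarith
  have hx1 : (1:ℝ) ≤ x := by linarith
  have hx2 : (1:ℝ) ≤ x / 2 := by linarith
  have hHx2 : H ≤ x / 2 := by linarith
  have hx2xH : x / 2 ≤ x - H := by linarith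
  have hTx : paretoTail α x = x ^ (-α) := paretoTail_of_ge α hx1
  have hTxpos : (0:ℝ) < x ^ (-α) := Real.rpow_pos_of_pos hx0 _
  have hnegα : -α ≤ 0 := neg_nonpos.mpr hα0.le
  -- key rpow identities
  have hkey : (x / 2) ^ (-α) / x ^ (-α) = 2 ^ α := by
    rw [Real.div_rpow hx0.le (by norm_num : (0:ℝ) ≤ 2)]
    rw [div_right_comm, div_self (ne_of_gt hTxpos), one_div,
      Real.rpow_neg (by norm_num : (0:ℝ) ≤ 2), inv_inv]
  have h2αpos : (0:ℝ) < 2 ^ α := Real.rpow_pos_of_pos (by norm_num) _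
  have hkey2 : H ^ (-α) / x ^ (-α) * (x / 2) ^ (-α) = 2 ^ α * H ^ (-α) := by
    rw [Real.div_rpow hx0.le (by norm_num : (0:ℝ) ≤ 2),
      Real.rpow_neg (by norm_num : (0:ℝ) ≤ 2)]
    field_simp
  have h2H : (2 / H) ^ α = 2 ^ α * H ^ (-α) := by
    rw [Real.div_rpow (by norm_num : (0:ℝ) ≤ 2) hH0.le, Real.rpow_neg hH0.le, div_eq_mul_inv]
  -- pointwise bounds
  have hmeas := measurable_integrand α x
  have hbound1 : ∀ y ∈ Set.Ioc H (x / 2),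
      ‖paretoTail α (x - y) / paretoTail α x‖ ≤ 2 ^ α := by
    intro y hy
    have hxy1 : (1:ℝ) ≤ x - y := by have := hy.2; linarith
    have hxy2 : x / 2 ≤ x - y := by have := hy.2; linarith
    rw [Real.norm_of_nonneg (div_nonneg (paretoTail_nonneg _ _) (paretoTail_nonneg _ _))]
    rw [paretoTail_of_ge α hxy1, hTx, ← hkey]
    exact (div_le_div_iff_of_pos_right hTxpos).mpr
      (Real.rpow_le_rpow_of_nonpos (by linarith) hxy2 hnegα)
  have hbound2 : ∀ y ∈ Set.Ioc (x / 2) (x - H),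
      ‖paretoTail α (x - y) / paretoTail α x‖ ≤ H ^ (-α) / x ^ (-α) := by
    intro y hy
    have hxy1 : H ≤ x - y := by have := hy.2; linarith
    have hxy1' : (1:ℝ) ≤ x - y := le_trans h1 hxy1
    rw [Real.norm_of_nonneg (div_nonneg (paretoTail_nonneg _ _) (paretoTail_nonneg _ _))]
    rw [paretoTail_of_ge α hxy1', hTx]
    exact (div_le_div_iff_of_pos_right hTxpos).mpr
      (Real.rpow_le_rpow_of_nonpos hH0 hxy1 hnegα)
  -- integrability on the pieces
  have hfin1 : paretoMeasure α (Set.Ioc H (x / 2)) ≠ ⊤ := by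
    rw [paretoMeasure_Ioc α hα0 h1 hHx2]; exact ENNReal.ofReal_ne_top
  have hfin2 : paretoMeasure α (Set.Ioc (x / 2) (x - H)) ≠ ⊤ := by
    rw [paretoMeasure_Ioc α hα0 hx2 hx2xH]; exact ENNReal.ofReal_ne_top
  have hInt1 : IntegrableOn (fun y => paretoTail α (x - y) / paretoTail α x)
      (Set.Ioc H (x / 2)) (paretoMeasure α) :=
    Measure.integrableOn_of_bounded hfin1 hmeas.aestronglyMeasurable
      ((ae_restrict_iff' measurableSet_Ioc).mpr (ae_of_all _ hbound1))
  have hInt2 : IntegrableOn (fun y => paretoTail α (x - y) / paretoTail α x)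
      (Set.Ioc (x / 2) (x - H)) (paretoMeasure α) :=
    Measure.integrableOn_of_bounded hfin2 hmeas.aestronglyMeasurable
      ((ae_restrict_iff' measurableSet_Ioc).mpr (ae_of_all _ hbound2))
  -- split
  have hunion : Set.Ioc H (x - H) = Set.Ioc H (x / 2) ∪ Set.Ioc (x / 2) (x - H) :=
    (Set.Ioc_union_Ioc_eq_Ioc hHx2 hx2xH).symm
  rw [hunion, setIntegral_union (Set.Ioc_disjoint_Ioc_of_le le_rfl) measurableSet_Ioc hInt1 hInt2]
  -- bound the pieces
  have p1 := piece_bound α hα0 h1 hHx2 h2αpos.le hmeas hbound1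
  have p2 := piece_bound α hα0 hx2 hx2xH
    (div_nonneg (Real.rpow_nonneg hH0.le _) hTxpos.le) hmeas hbound2
  rw [hkey2] at p2
  have h4x : (0:ℝ) ≤ (4 / x) ^ α := Real.rpow_nonneg (by positivity) _
  rw [h2H]
  linarith [p1, p2]
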